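/- Let hU, hV, s ∈ ℚ, let k, d ∈ ℚ with k ≠ 0, d ≠ 0, set r := k/d and A := (hU − hV)/2, and define grf_r(t) := ((2t − r)² + r)/(4r). Then ( (min(hU, hV + 2s) + grf_r(s)) − (min(hU, hV + 2(s−1)) + grf_r(s−1)) ) / 2 = max(0, A − (s−1)) − max(0, A − s) + (2sd − k − d)/(2k). -/
import Mathlib

/-- half the difference of the two dual-knot heights equals the
Hedden–Levine Alexander grading `𝒥 − ℐ`. -/
theorem dual_knot_alexander_grading_match
    (hU hV s k d : ℚ) (hk : k ≠ 0) (hd : d ≠ 0) :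
    ((min hU (hV + 2 * s) + ((2 * s - k / d) ^ 2 + k / d) / (4 * (k / d)))
        - (min hU (hV + 2 * (s - 1))
            + ((2 * (s - 1) - k / d) ^ 2 + k / d) / (4 * (k / d)))) / 2
      = max 0 ((hU - hV) / 2 - (s - 1)) - max 0 ((hU - hV) / 2 - s)
          + (2 * s * d - k - d) / (2 * k) := by
  rcases le_total hU (hV + 2 * s) with h1 | h1 <;>
  rcases le_total hU (hV + 2 * (s - 1)) with h2 | h2 <;>
  [skip; skip; skip; skip] <;>
  first
  | (rw [min_eq_left h1, min_eq_left h2,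
        max_eq_left (by linarith : (hU - hV) / 2 - (s - 1) ≤ 0),
        max_eq_left (by linarith : (hU - hV) / 2 - s ≤ 0)]
     field_simp
     ring)
  | (rw [min_eq_left h1, min_eq_right h2,
        max_eq_right (by linarith : (0:ℚ) ≤ (hU - hV) / 2 - (s - 1)),
        max_eq_left (by linarith : (hU - hV) / 2 - s ≤ 0)]
     field_simp
     ring)
  | (rw [min_eq_right h1, min_eq_left h2,
        max_eq_left (by linarith : (hU - hV) / 2 - (s - 1) ≤ 0),
        max_eq_right (by linarith : (0:ℚ) ≤ (hU - hV) / 2 - s)]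
     field_simp
     ring)
  | (rw [min_eq_right h1, min_eq_right h2,
        max_eq_right (by linarith : (0:ℚ) ≤ (hU - hV) / 2 - (s - 1)),
        max_eq_right (by linarith : (0:ℚ) ≤ (hU - hV) / 2 - s)]
     field_simp
     ring)
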